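/- Let n ≥ 1, let S be a skew-symmetric n×n complex matrix, let X be an n×n complex matrix, and let i, j, i', j' ∈ {1,…,n}. Let E_{ab} denote the n×n matrix unit and let R_S ξ = R_0 ξ + diag((S·δ(ξ))_1,…,(S·δ(ξ))_n), where δ(ξ) is the vector of diagonal entries of ξ and (R_0 ξ)_{ij} = sign(j−i)·ξ_{ij}. Then ½·Tr(R_S(E_{ji}·X)·(E_{j'i'}·X)) − ½·Tr(R_S(X·E_{ji})·(X·E_{j'i'})) = ½·(sign(i'−i) + sign(j'−j))·X_{ij'}·X_{i'j} + ½·(S_{ii'} − S_{jj'})·X_{ij}·X_{i'j'}. (This is the Sklyanin bracket of the coordinate functions x_{ij} and x_{i'j'} associated with R_S, evaluated at X.) -/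

import Mathlib

/-- The standard R-matrix `R₀` on `n × n` complex matrices:
`(R₀ ξ)_{ij} = sign(j - i) · ξ_{ij}`. -/
def R0 {n : ℕ} (ξ : Matrix (Fin n) (Fin n) ℂ) : Matrix (Fin n) (Fin n) ℂ :=
  Matrix.of fun i j => ((Int.sign ((j : ℤ) - (i : ℤ)) : ℤ) : ℂ) * ξ i j

/-- The R-matrix `R_S = R₀ + S π₀`, sending `ξ` to `R₀ ξ` plus the diagonal matrix
whose `i`-th diagonal entry is `(S · δ(ξ))_i = Σ_j S_{ij} ξ_{jj}`. -/
noncomputable def RS {n : ℕ} (S : Matrix (Fin n) (Fin n) ℂ)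
    (ξ : Matrix (Fin n) (Fin n) ℂ) : Matrix (Fin n) (Fin n) ℂ :=
  R0 ξ + Matrix.diagonal (fun i => ∑ j, S i j * ξ j j)

/-- The matrix unit `E_{ab}` with a `1` in position `(a,b)` and `0` elsewhere. -/
def E {n : ℕ} (a b : Fin n) : Matrix (Fin n) (Fin n) ℂ :=
  Matrix.single a b 1

/-- The Sklyanin bracket associated with `R_S`, evaluated on the coordinate functions
`x_{ij}`, `x_{i'j'}` at the matrix `X`:
`½ Tr(R_S(E_{ji}X)·(E_{j'i'}X)) − ½ Tr(R_S(X E_{ji})·(X E_{j'i'}))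
  = ½ (sign(i'−i) + sign(j'−j)) X_{ij'} X_{i'j} + ½ (S_{ii'} − S_{jj'}) X_{ij} X_{i'j'}`. -/
theorem sklyanin_RS_on_matrix_entries (n : ℕ) (hn : 1 ≤ n)
    (S : Matrix (Fin n) (Fin n) ℂ) (hS : Matrix.transpose S = -S)
    (X : Matrix (Fin n) (Fin n) ℂ) (i j i' j' : Fin n) :
    (1 / 2 : ℂ) * Matrix.trace (RS S (E j i * X) * (E j' i' * X))
      - (1 / 2 : ℂ) * Matrix.trace (RS S (X * E j i) * (X * E j' i'))
      = (1 / 2 : ℂ)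
          * ((Int.sign ((i' : ℤ) - (i : ℤ)) + Int.sign ((j' : ℤ) - (j : ℤ)) : ℤ) : ℂ)
          * X i j' * X i' j
        + (1 / 2 : ℂ) * (S i i' - S j j') * X i j * X i' j' := by
  have hS' : ∀ a b : Fin n, S b a = -S a b := by
    intro a b
    have := congrFun (congrFun hS a) b
    simpa [Matrix.transpose_apply] using this
  have hsign : ((Int.sign ((i : ℤ) - (i' : ℤ)) : ℤ) : ℂ)
      = -((Int.sign ((i' : ℤ) - (i : ℤ)) : ℤ) : ℂ) := by
    have : (i : ℤ) - (i' : ℤ) = -((i' : ℤ) - (i : ℤ)) := by ring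
    rw [this, Int.sign_neg]; push_cast; ring
  simp only [RS, R0, E, Matrix.trace, Matrix.diag, Matrix.mul_apply, Matrix.add_apply,
    Matrix.of_apply, Matrix.diagonal_apply, Matrix.single, add_mul, mul_ite,
    ite_mul, mul_one, mul_zero, zero_mul, one_mul, Finset.sum_add_distrib,
    ite_and, Finset.sum_ite_eq, Finset.sum_ite_eq', Finset.mem_univ, if_true, Finset.sum_ite_irrel,
    Finset.sum_const_zero]
  simp only [hS' i' i, hS' j' j]
  rw [hsign]
  push_cast
  ring
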